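/- Let C₁ > 0 and C₂ > 0, and define ξ_p, ψ, r as in the JKD setting. Then the first moment of the representing measure dλ^D = ψ(u)du + r·δ_{ξ_p} equals C₂² + C₁C₂/2; that is, ∫₀^{C₁} u ψ(u) du + r·ξ_p = C₂² + C₁C₂/2. -/

import Mathlib

/-- The pole location ξ_p of the JKD function R^D. -/
noncomputable def xip (C₁ C₂ : ℝ) : ℝ := (C₁ + Real.sqrt (C₁ ^ 2 + 4 * C₂ ^ 2)) / 2

/-- The density ψ of the absolutely continuous part of the JKD representing measure. -/
noncomputable def psi (C₁ C₂ u : ℝ) : ℝ :=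
  C₂ * Real.sqrt (u * (C₁ - u)) / (Real.pi * (C₂ ^ 2 + u * (C₁ - u)))

open Real Filter Set Topology intervalIntegral

noncomputable def sJ (C₁ C₂ : ℝ) : ℝ := Real.sqrt (C₁ ^ 2 + 4 * C₂ ^ 2)

noncomputable def FJ (C₁ C₂ u : ℝ) : ℝ :=
  (C₂ / Real.pi) * ( -Real.sqrt (u * (C₁ - u))
    + (C₁ / 2) * Real.arcsin ((2 * u - C₁) / C₁)
    + (C₁ * C₂ / sJ C₁ C₂) * Real.arctan ((C₂ * (C₁ - 2 * u) / sJ C₁ C₂) * (Real.sqrt (u * (C₁ - u)))⁻¹)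
    + C₂ * Real.arctan (Real.sqrt (u * (C₁ - u)) / C₂) )

lemma sJ_sq (C₁ C₂ : ℝ) (hC₂ : 0 < C₂) : sJ C₁ C₂ ^ 2 = C₁ ^ 2 + 4 * C₂ ^ 2 := by
  rw [sJ, Real.sq_sqrt]; positivity

lemma sJ_pos (C₁ C₂ : ℝ) (hC₂ : 0 < C₂) : 0 < sJ C₁ C₂ := by
  rw [sJ]; positivity

lemma FJ_hasDerivAt (C₁ C₂ : ℝ) (hC₁ : 0 < C₁) (hC₂ : 0 < C₂) {x : ℝ} (hx : x ∈ Set.Ioo 0 C₁) :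
    HasDerivAt (FJ C₁ C₂) (x * psi C₁ C₂ x) x := by
  obtain ⟨hx0, hxC⟩ := hx
  have hw : 0 < x * (C₁ - x) := mul_pos hx0 (by linarith)
  set W := Real.sqrt (x * (C₁ - x)) with hWdef
  have hW : 0 < W := Real.sqrt_pos.2 hw
  have hW2 : W ^ 2 = x * (C₁ - x) := Real.sq_sqrt hw.le
  set s := sJ C₁ C₂ with hsdef
  have hs : 0 < s := sJ_pos C₁ C₂ hC₂
  have hs2 : s ^ 2 = C₁ ^ 2 + 4 * C₂ ^ 2 := sJ_sq C₁ C₂ hC₂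
  have h4w : (C₁ - 2 * x) ^ 2 = C₁ ^ 2 - 4 * W ^ 2 := by linear_combination 4 * hW2
  -- derivative of w
  have hwd : HasDerivAt (fun u : ℝ => u * (C₁ - u)) (C₁ - 2 * x) x := by
    have := (hasDerivAt_id x).mul ((hasDerivAt_const x C₁).sub (hasDerivAt_id x))
    refine this.congr_deriv ?_; simp only [id_eq, Pi.sub_apply]; ring
  -- derivative of sqrt w
  have hsqrt : HasDerivAt (fun u : ℝ => Real.sqrt (u * (C₁ - u))) ((C₁ - 2 * x) / (2 * W)) x := by
    have := (Real.hasDerivAt_sqrt hw.ne').comp x hwd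
    refine this.congr_deriv ?_
    rw [← hWdef]; ring
  -- piece 1
  have h1 : HasDerivAt (fun u : ℝ => -Real.sqrt (u * (C₁ - u))) (-((C₁ - 2 * x) / (2 * W))) x :=
    hsqrt.neg
  -- piece 2 : arcsin
  have hg : HasDerivAt (fun u : ℝ => (2 * u - C₁) / C₁) (2 / C₁) x := by
    have := (((hasDerivAt_id x).const_mul 2).sub_const C₁).div_const C₁
    refine this.congr_deriv ?_; ring
  have hgne1 : (2 * x - C₁) / C₁ ≠ -1 := by
    intro h
    have := (div_eq_iff hC₁.ne').1 h
    nlinarith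
  have hgne2 : (2 * x - C₁) / C₁ ≠ 1 := by
    intro h
    have := (div_eq_iff hC₁.ne').1 h
    nlinarith
  have hsq1 : Real.sqrt (1 - ((2 * x - C₁) / C₁) ^ 2) = 2 * W / C₁ := by
    have : 1 - ((2 * x - C₁) / C₁) ^ 2 = (2 * W / C₁) ^ 2 := by
      field_simp
      linear_combination (-4) * hW2
    rw [this, Real.sqrt_sq (by positivity)]
  have h2 : HasDerivAt (fun u : ℝ => (C₁ / 2) * Real.arcsin ((2 * u - C₁) / C₁)) (C₁ / (2 * W)) x := by
    have := ((Real.hasDerivAt_arcsin hgne1 hgne2).comp x hg).const_mul (C₁ / 2)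
    refine this.congr_deriv ?_
    rw [hsq1]
    field_simp
  -- piece 3 : arctan with v
  have hA : HasDerivAt (fun u : ℝ => C₂ * (C₁ - 2 * u) / s) (-2 * C₂ / s) x := by
    have := ((((hasDerivAt_id x).const_mul 2).const_sub C₁).const_mul C₂).div_const s
    refine this.congr_deriv ?_; ring
  have hB : HasDerivAt (fun u : ℝ => (Real.sqrt (u * (C₁ - u)))⁻¹)
      (-((C₁ - 2 * x) / (2 * W)) / W ^ 2) x := hsqrt.inv hW.ne'
  have hv : HasDerivAt (fun u : ℝ => (C₂ * (C₁ - 2 * u) / s) * (Real.sqrt (u * (C₁ - u)))⁻¹)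
      ((-2 * C₂ / s) * W⁻¹ + (C₂ * (C₁ - 2 * x) / s) * (-((C₁ - 2 * x) / (2 * W)) / W ^ 2)) x := by
    have := hA.mul hB
    exact this
  have h1v : 1 + ((C₂ * (C₁ - 2 * x) / s) * W⁻¹) ^ 2
      = C₁ ^ 2 * (C₂ ^ 2 + W ^ 2) / (s ^ 2 * W ^ 2) := by
    have key : s^2*W^2 + C₂^2*(C₁-2*x)^2 = C₁^2*(C₂^2+W^2) := by
      linear_combination W^2 * hs2 + C₂^2 * h4w
    field_simp
    linear_combination key
  have h3 : HasDerivAt (fun u : ℝ => (C₁ * C₂ / s) *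
        Real.arctan ((C₂ * (C₁ - 2 * u) / s) * (Real.sqrt (u * (C₁ - u)))⁻¹))
      (-(C₁ * C₂ ^ 2) / (2 * W * (C₂ ^ 2 + W ^ 2))) x := by
    have := ((Real.hasDerivAt_arctan _).comp x hv).const_mul (C₁ * C₂ / s)
    refine this.congr_deriv ?_
    rw [h1v]
    field_simp
    linear_combination (-4) * hW2
  -- piece 4
  have hq : HasDerivAt (fun u : ℝ => Real.sqrt (u * (C₁ - u)) / C₂) ((C₁ - 2 * x) / (2 * W) / C₂) x :=
    hsqrt.div_const C₂
  have h4 : HasDerivAt (fun u : ℝ => C₂ * Real.arctan (Real.sqrt (u * (C₁ - u)) / C₂))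
      (C₂ ^ 2 * (C₁ - 2 * x) / (2 * W * (C₂ ^ 2 + W ^ 2))) x := by
    have := ((Real.hasDerivAt_arctan _).comp x hq).const_mul C₂
    refine this.congr_deriv ?_
    rw [← hWdef]
    field_simp
  have htot := (((h1.add h2).add h3).add h4).const_mul (C₂ / Real.pi)
  have : FJ C₁ C₂ = fun u => (C₂ / Real.pi) * ( -Real.sqrt (u * (C₁ - u))
    + (C₁ / 2) * Real.arcsin ((2 * u - C₁) / C₁)
    + (C₁ * C₂ / s) * Real.arctan ((C₂ * (C₁ - 2 * u) / s) * (Real.sqrt (u * (C₁ - u)))⁻¹)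
    + C₂ * Real.arctan (Real.sqrt (u * (C₁ - u)) / C₂) ) := rfl
  rw [this]
  refine htot.congr_deriv ?_
  rw [psi, ← hWdef, ← hW2]
  have hpi : Real.pi ≠ 0 := Real.pi_ne_zero
  field_simp
  ring

lemma psi_integrable (C₁ C₂ : ℝ) (hC₁ : 0 < C₁) (hC₂ : 0 < C₂) :
    IntervalIntegrable (fun u => u * psi C₁ C₂ u) MeasureTheory.volume 0 C₁ := by
  apply ContinuousOn.intervalIntegrable
  rw [uIcc_of_le hC₁.le]
  have hden : ∀ u ∈ Icc (0:ℝ) C₁, Real.pi * (C₂ ^ 2 + u * (C₁ - u)) ≠ 0 := by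
    intro u hu
    have h1 : 0 ≤ u * (C₁ - u) := mul_nonneg hu.1 (by linarith [hu.2])
    positivity
  apply ContinuousOn.mul continuousOn_id
  exact ContinuousOn.div (by fun_prop) (by fun_prop) hden

lemma FJ_tendsto_zero (C₁ C₂ : ℝ) (hC₁ : 0 < C₁) (hC₂ : 0 < C₂) :
    Tendsto (FJ C₁ C₂) (𝓝[>] (0:ℝ))
      (𝓝 (-(C₁ * C₂) / 4 + C₁ * C₂ ^ 2 / (2 * sJ C₁ C₂))) := by
  set s := sJ C₁ C₂ with hsdef
  have hs : 0 < s := sJ_pos C₁ C₂ hC₂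
  have hmem : Ioo (0:ℝ) C₁ ∈ 𝓝[>] (0:ℝ) := Ioo_mem_nhdsGT_of_mem ⟨le_refl 0, hC₁⟩
  have hsqrt0 : Tendsto (fun u : ℝ => Real.sqrt (u * (C₁ - u))) (𝓝[>] (0:ℝ)) (𝓝 0) := by
    have hc : Continuous fun u : ℝ => Real.sqrt (u * (C₁ - u)) := by fun_prop
    have h : Tendsto (fun u : ℝ => Real.sqrt (u * (C₁ - u))) (𝓝[>] (0:ℝ))
        (𝓝 (Real.sqrt (0 * (C₁ - 0)))) := (hc.tendsto 0).mono_left nhdsWithin_le_nhds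
    simpa using h
  have l2 : Tendsto (fun u : ℝ => (Real.sqrt (u * (C₁ - u)))⁻¹) (𝓝[>] (0:ℝ)) atTop := by
    apply tendsto_inv_nhdsGT_zero.comp
    rw [tendsto_nhdsWithin_iff]
    refine ⟨hsqrt0, ?_⟩
    filter_upwards [hmem] with u hu
    exact Real.sqrt_pos.2 (mul_pos hu.1 (by linarith [hu.2]))
  have l1 : Tendsto (fun u : ℝ => C₂ * (C₁ - 2 * u) / s) (𝓝[>] (0:ℝ)) (𝓝 (C₂ * C₁ / s)) := by
    have hc : Continuous fun u : ℝ => C₂ * (C₁ - 2 * u) / s := by fun_prop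
    have h : Tendsto (fun u : ℝ => C₂ * (C₁ - 2 * u) / s) (𝓝[>] (0:ℝ))
        (𝓝 (C₂ * (C₁ - 2 * 0) / s)) := (hc.tendsto 0).mono_left nhdsWithin_le_nhds
    simpa using h
  have l3 : Tendsto (fun u : ℝ => (C₂ * (C₁ - 2 * u) / s) * (Real.sqrt (u * (C₁ - u)))⁻¹)
      (𝓝[>] (0:ℝ)) atTop := l1.pos_mul_atTop (by positivity) l2
  have t3 : Tendsto (fun u : ℝ => Real.arctan ((C₂ * (C₁ - 2 * u) / s) * (Real.sqrt (u * (C₁ - u)))⁻¹))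
      (𝓝[>] (0:ℝ)) (𝓝 (Real.pi / 2)) :=
    (Real.tendsto_arctan_atTop.mono_right nhdsWithin_le_nhds).comp l3
  have t2 : Tendsto (fun u : ℝ => Real.arcsin ((2 * u - C₁) / C₁)) (𝓝[>] (0:ℝ))
      (𝓝 (-(Real.pi / 2))) := by
    have hc : Continuous fun u : ℝ => Real.arcsin ((2 * u - C₁) / C₁) :=
      Real.continuous_arcsin.comp (by fun_prop)
    have h : Tendsto (fun u : ℝ => Real.arcsin ((2 * u - C₁) / C₁)) (𝓝[>] (0:ℝ))
        (𝓝 (Real.arcsin ((2 * 0 - C₁) / C₁))) := (hc.tendsto 0).mono_left nhdsWithin_le_nhds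
    have hv : (2 * (0:ℝ) - C₁) / C₁ = -1 := by rw [mul_zero, zero_sub, neg_div, div_self hC₁.ne']
    rw [hv, Real.arcsin_neg_one] at h
    exact h
  have t4 : Tendsto (fun u : ℝ => Real.arctan (Real.sqrt (u * (C₁ - u)) / C₂)) (𝓝[>] (0:ℝ))
      (𝓝 0) := by
    have h := (Real.continuous_arctan.tendsto ((0:ℝ)/C₂)).comp (hsqrt0.div_const C₂)
    rw [zero_div, Real.arctan_zero] at h
    exact h
  have htot := ((((hsqrt0.neg.add (t2.const_mul (C₁ / 2))).add
      (t3.const_mul (C₁ * C₂ / s))).add (t4.const_mul C₂)).const_mul (C₂ / Real.pi))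
  have hFeq : FJ C₁ C₂ = fun u => (C₂ / Real.pi) * ( -Real.sqrt (u * (C₁ - u))
    + (C₁ / 2) * Real.arcsin ((2 * u - C₁) / C₁)
    + (C₁ * C₂ / s) * Real.arctan ((C₂ * (C₁ - 2 * u) / s) * (Real.sqrt (u * (C₁ - u)))⁻¹)
    + C₂ * Real.arctan (Real.sqrt (u * (C₁ - u)) / C₂) ) := rfl
  rw [hFeq]
  convert htot using 2
  have hpi := Real.pi_ne_zero
  field_simp
  ring

lemma FJ_tendsto_C₁ (C₁ C₂ : ℝ) (hC₁ : 0 < C₁) (hC₂ : 0 < C₂) :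
    Tendsto (FJ C₁ C₂) (𝓝[<] C₁)
      (𝓝 (C₁ * C₂ / 4 - C₁ * C₂ ^ 2 / (2 * sJ C₁ C₂))) := by
  set s := sJ C₁ C₂ with hsdef
  have hs : 0 < s := sJ_pos C₁ C₂ hC₂
  have hmem : Ioo (0:ℝ) C₁ ∈ 𝓝[<] C₁ := Ioo_mem_nhdsLT_of_mem ⟨hC₁, le_refl C₁⟩
  have hsqrt0 : Tendsto (fun u : ℝ => Real.sqrt (u * (C₁ - u))) (𝓝[<] C₁) (𝓝 0) := by
    have hc : Continuous fun u : ℝ => Real.sqrt (u * (C₁ - u)) := by fun_prop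
    have h : Tendsto (fun u : ℝ => Real.sqrt (u * (C₁ - u))) (𝓝[<] C₁)
        (𝓝 (Real.sqrt (C₁ * (C₁ - C₁)))) := (hc.tendsto C₁).mono_left nhdsWithin_le_nhds
    simpa using h
  have l2 : Tendsto (fun u : ℝ => (Real.sqrt (u * (C₁ - u)))⁻¹) (𝓝[<] C₁) atTop := by
    apply tendsto_inv_nhdsGT_zero.comp
    rw [tendsto_nhdsWithin_iff]
    refine ⟨hsqrt0, ?_⟩
    filter_upwards [hmem] with u hu
    exact Real.sqrt_pos.2 (mul_pos hu.1 (by linarith [hu.2]))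
  have l1 : Tendsto (fun u : ℝ => C₂ * (C₁ - 2 * u) / s) (𝓝[<] C₁) (𝓝 (C₂ * (C₁ - 2 * C₁) / s)) := by
    have : Continuous fun u : ℝ => C₂ * (C₁ - 2 * u) / s := by fun_prop
    exact (this.tendsto C₁).mono_left nhdsWithin_le_nhds
  have l3 : Tendsto (fun u : ℝ => (C₂ * (C₁ - 2 * u) / s) * (Real.sqrt (u * (C₁ - u)))⁻¹)
      (𝓝[<] C₁) atBot := by
    apply l1.neg_mul_atTop _ l2
    have : C₂ * (C₁ - 2 * C₁) / s = -(C₂ * C₁ / s) := by ring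
    rw [this]
    have : 0 < C₂ * C₁ / s := by positivity
    linarith
  have t3 : Tendsto (fun u : ℝ => Real.arctan ((C₂ * (C₁ - 2 * u) / s) * (Real.sqrt (u * (C₁ - u)))⁻¹))
      (𝓝[<] C₁) (𝓝 (-(Real.pi / 2))) :=
    (Real.tendsto_arctan_atBot.mono_right nhdsWithin_le_nhds).comp l3
  have t2 : Tendsto (fun u : ℝ => Real.arcsin ((2 * u - C₁) / C₁)) (𝓝[<] C₁)
      (𝓝 (Real.pi / 2)) := by
    have hc : Continuous fun u : ℝ => Real.arcsin ((2 * u - C₁) / C₁) :=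
      Real.continuous_arcsin.comp (by fun_prop)
    have h : Tendsto (fun u : ℝ => Real.arcsin ((2 * u - C₁) / C₁)) (𝓝[<] C₁)
        (𝓝 (Real.arcsin ((2 * C₁ - C₁) / C₁))) := (hc.tendsto C₁).mono_left nhdsWithin_le_nhds
    have hv : (2 * C₁ - C₁) / C₁ = 1 := by field_simp; ring
    rw [hv, Real.arcsin_one] at h
    exact h
  have t4 : Tendsto (fun u : ℝ => Real.arctan (Real.sqrt (u * (C₁ - u)) / C₂)) (𝓝[<] C₁)
      (𝓝 0) := by
    have h := (Real.continuous_arctan.tendsto ((0:ℝ)/C₂)).comp (hsqrt0.div_const C₂)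
    rw [zero_div, Real.arctan_zero] at h
    exact h
  have htot := ((((hsqrt0.neg.add (t2.const_mul (C₁ / 2))).add
      (t3.const_mul (C₁ * C₂ / s))).add (t4.const_mul C₂)).const_mul (C₂ / Real.pi))
  have hFeq : FJ C₁ C₂ = fun u => (C₂ / Real.pi) * ( -Real.sqrt (u * (C₁ - u))
    + (C₁ / 2) * Real.arcsin ((2 * u - C₁) / C₁)
    + (C₁ * C₂ / s) * Real.arctan ((C₂ * (C₁ - 2 * u) / s) * (Real.sqrt (u * (C₁ - u)))⁻¹)
    + C₂ * Real.arctan (Real.sqrt (u * (C₁ - u)) / C₂) ) := rfl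
  rw [hFeq]
  convert htot using 2
  have hpi := Real.pi_ne_zero
  field_simp
  ring

lemma integral_part (C₁ C₂ : ℝ) (hC₁ : 0 < C₁) (hC₂ : 0 < C₂) :
    ∫ u in (0:ℝ)..C₁, u * psi C₁ C₂ u
      = C₁ * C₂ / 2 - C₁ * C₂ ^ 2 / sJ C₁ C₂ := by
  have hs : 0 < sJ C₁ C₂ := sJ_pos C₁ C₂ hC₂
  rw [intervalIntegral.integral_eq_sub_of_hasDerivAt_of_tendsto hC₁
    (fun x hx => FJ_hasDerivAt C₁ C₂ hC₁ hC₂ hx) (psi_integrable C₁ C₂ hC₁ hC₂)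
    (FJ_tendsto_zero C₁ C₂ hC₁ hC₂) (FJ_tendsto_C₁ C₁ C₂ hC₁ hC₂)]
  field_simp
  ring


/-- The strength r of the Dirac mass at ξ_p. -/
noncomputable def rres (C₁ C₂ : ℝ) : ℝ :=
  2 * C₂ * Real.sqrt (xip C₁ C₂ * (xip C₁ C₂ - C₁)) / (2 * xip C₁ C₂ - C₁)

/-- The first moment of the representing measure dλ^D equals C₂² + C₁C₂/2. -/
theorem stmt6 (C₁ C₂ : ℝ) (hC₁ : 0 < C₁) (hC₂ : 0 < C₂) :
    (∫ u in (0:ℝ)..C₁, u * psi C₁ C₂ u) + rres C₁ C₂ * xip C₁ C₂ =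
      C₂ ^ 2 + C₁ * C₂ / 2 := by
  have hs : 0 < sJ C₁ C₂ := sJ_pos C₁ C₂ hC₂
  have hs2 := sJ_sq C₁ C₂ hC₂
  have hxi : xip C₁ C₂ = (C₁ + sJ C₁ C₂) / 2 := rfl
  have hx1 : xip C₁ C₂ * (xip C₁ C₂ - C₁) = C₂ ^ 2 := by
    rw [hxi]; linear_combination hs2 / 4
  have h2x : 2 * xip C₁ C₂ - C₁ = sJ C₁ C₂ := by rw [hxi]; ring
  have hr : rres C₁ C₂ = 2 * C₂ ^ 2 / sJ C₁ C₂ := by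
    rw [rres, hx1, Real.sqrt_sq hC₂.le, h2x]; ring
  rw [integral_part C₁ C₂ hC₁ hC₂, hr, hxi]
  field_simp
  ring
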